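/- arXiv:2405.08135 — 2 statements merged into one kernel-verified Lean document; each statement's English description precedes it below -/
import Mathlib

section
/- Let P be a finite set partitioned into m parts each of size c, let r ∈ (1/2,1) with rc ∈ ℤ, and let 𝕼 be a family of sets of parts with minimum pairwise intersection slash(𝕼). Define 𝒬 = 𝔓_r(𝕼) as the family of subsets S of P such that for some 𝒮 ∈ 𝕼, S contains at least rc elements of each part of 𝒮. Then the minimum pairwise intersection of 𝒬 satisfies slash(𝒬) = (2r−1)·c·slash(𝕼). -/
open Finset

/-- If 𝒞 partitions P into parts of size c, 1/2 < r < 1 with rc = t ∈ ℤ, 𝕼 a nonempty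
family of sets of parts with minimum pairwise intersection slash𝕼, and
𝒬 = 𝔓_r(𝕼) is the family of subsets of P containing at least rc elements of each part
of some member of 𝕼, then the minimum pairwise intersection of 𝒬 is (2r−1)·c·slash𝕼. -/
theorem slash_P_r {P : Type*} [Fintype P] [DecidableEq P]
    (𝒞 : Finset (Finset P)) (c t : ℕ) (r : ℚ)
    (hpart : (𝒞 : Set (Finset P)).PairwiseDisjoint id)
    (hcover : 𝒞.sup id = Finset.univ)
    (hsize : ∀ X ∈ 𝒞, X.card = c)
    (hr : 1 / 2 < r) (hr1 : r < 1) (ht : (t : ℚ) = r * c)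
    (𝕼 : Finset (Finset (Finset P))) (h𝕼 : 𝕼.Nonempty)
    (h𝕼𝒞 : ∀ 𝒮 ∈ 𝕼, 𝒮 ⊆ 𝒞)
    (slash𝕼 : ℕ)
    (hslash : IsLeast {m : ℕ | ∃ 𝒮 ∈ 𝕼, ∃ 𝒯 ∈ 𝕼, (𝒮 ∩ 𝒯).card = m} slash𝕼)
    (𝒬 : Set (Finset P))
    (h𝒬 : 𝒬 = {S : Finset P | ∃ 𝒮 ∈ 𝕼, ∀ X ∈ 𝒮, r * c ≤ ((S ∩ X).card : ℚ)}) :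
    IsLeast {x : ℚ | ∃ S ∈ 𝒬, ∃ T ∈ 𝒬, x = ((S ∩ T).card : ℚ)}
      ((2 * r - 1) * c * slash𝕼) := by
  classical
  subst h𝒬
  have hc0 : (0 : ℚ) ≤ (c : ℚ) := Nat.cast_nonneg c
  have htc : t ≤ c := by
    have h : (t : ℚ) ≤ (c : ℚ) := by rw [ht]; nlinarith
    exact_mod_cast h
  have hc2t : c ≤ 2 * t := by
    have h : (c : ℚ) ≤ 2 * (t : ℚ) := by rw [ht]; nlinarith
    exact_mod_cast h
  have hcast : ((2 * t - c : ℕ) : ℚ) = (2 * r - 1) * c := by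
    rw [Nat.cast_sub hc2t]
    push_cast
    rw [ht]; ring
  -- per-part lower bound
  have key : ∀ S T X : Finset P, X ∈ 𝒞 → r * c ≤ ((S ∩ X).card : ℚ) →
      r * c ≤ ((T ∩ X).card : ℚ) → 2 * t - c ≤ (S ∩ T ∩ X).card := by
    intro S T X hX hS hT
    have hSt : t ≤ (S ∩ X).card := by
      have : (t : ℚ) ≤ ((S ∩ X).card : ℚ) := ht ▸ hS
      exact_mod_cast this
    have hTt : t ≤ (T ∩ X).card := by
      have : (t : ℚ) ≤ ((T ∩ X).card : ℚ) := ht ▸ hT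
      exact_mod_cast this
    have hu : ((S ∩ X) ∪ (T ∩ X)).card ≤ c := by
      rw [← hsize X hX]
      exact card_le_card (union_subset inter_subset_right inter_subset_right)
    have he : (S ∩ X) ∩ (T ∩ X) = S ∩ T ∩ X := by
      ext p; simp only [mem_inter]; tauto
    have hsum := Finset.card_union_add_card_inter (S ∩ X) (T ∩ X)
    rw [he] at hsum
    omega
  constructor
  · -- membership: construct S and T achieving the minimum
    obtain ⟨𝒮, h𝒮, 𝒯, h𝒯, hST⟩ := hslash.1
    have hex : ∀ X : Finset P, ∃ AB : Finset P × Finset P, X.card = c →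
        AB.1 ⊆ X ∧ AB.2 ⊆ X ∧ AB.1.card = t ∧ AB.2.card = t ∧
        (AB.1 ∩ AB.2).card = 2 * t - c := by
      intro X
      by_cases hXc : X.card = c
      · obtain ⟨A, hAX, hAcard⟩ := Finset.exists_subset_card_eq (hXc ▸ htc : t ≤ X.card)
        obtain ⟨I, hIA, hIcard⟩ :=
          Finset.exists_subset_card_eq (by omega : 2 * t - c ≤ A.card)
        refine ⟨(A, I ∪ (X \ A)), fun _ => ⟨hAX, ?_, hAcard, ?_, ?_⟩⟩
        · exact union_subset (hIA.trans hAX) (sdiff_subset)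
        · have hdisj : Disjoint I (X \ A) :=
            Finset.disjoint_left.mpr fun p hp hps => (mem_sdiff.mp hps).2 (hIA hp)
          rw [card_union_of_disjoint hdisj, hIcard, card_sdiff_of_subset hAX, hAcard, hXc]
          omega
        · have : A ∩ (I ∪ (X \ A)) = I := by
            ext p
            simp only [mem_inter, mem_union, mem_sdiff]
            constructor
            · rintro ⟨hpA, hpI | ⟨_, hpnA⟩⟩
              · exact hpI
              · exact absurd hpA hpnA
            · intro hpI; exact ⟨hIA hpI, Or.inl hpI⟩
          rw [this, hIcard]
      · exact ⟨(∅, ∅), fun h => absurd h hXc⟩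
    choose f hf using hex
    set A : Finset P → Finset P := fun X => (f X).1 with hA
    set B : Finset P → Finset P := fun X => (f X).2 with hB
    set S : Finset P := 𝒮.biUnion A with hS
    set T : Finset P := 𝒯.biUnion B with hT
    have hAprop : ∀ X ∈ 𝒞, A X ⊆ X ∧ (A X).card = t := fun X hX =>
      ⟨(hf X (hsize X hX)).1, (hf X (hsize X hX)).2.2.1⟩
    have hBprop : ∀ X ∈ 𝒞, B X ⊆ X ∧ (B X).card = t := fun X hX =>
      ⟨(hf X (hsize X hX)).2.1, (hf X (hsize X hX)).2.2.2.1⟩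
    have hABprop : ∀ X ∈ 𝒞, (A X ∩ B X).card = 2 * t - c := fun X hX =>
      (hf X (hsize X hX)).2.2.2.2
    have hSQ : ∃ 𝒮' ∈ 𝕼, ∀ X ∈ 𝒮', r * c ≤ (((S : Finset P) ∩ X).card : ℚ) := by
      refine ⟨𝒮, h𝒮, fun X hX => ?_⟩
      have hX𝒞 : X ∈ 𝒞 := h𝕼𝒞 𝒮 h𝒮 hX
      have hsub : A X ⊆ S ∩ X :=
        subset_inter (subset_biUnion_of_mem A hX) (hAprop X hX𝒞).1
      have : t ≤ (S ∩ X).card := (hAprop X hX𝒞).2 ▸ card_le_card hsub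
      calc r * c = (t : ℚ) := ht.symm
        _ ≤ _ := by exact_mod_cast this
    have hTQ : ∃ 𝒯' ∈ 𝕼, ∀ X ∈ 𝒯', r * c ≤ (((T : Finset P) ∩ X).card : ℚ) := by
      refine ⟨𝒯, h𝒯, fun X hX => ?_⟩
      have hX𝒞 : X ∈ 𝒞 := h𝕼𝒞 𝒯 h𝒯 hX
      have hsub : B X ⊆ T ∩ X :=
        subset_inter (subset_biUnion_of_mem B hX) (hBprop X hX𝒞).1
      have : t ≤ (T ∩ X).card := (hBprop X hX𝒞).2 ▸ card_le_card hsub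
      calc r * c = (t : ℚ) := ht.symm
        _ ≤ _ := by exact_mod_cast this
    refine ⟨S, hSQ, T, hTQ, ?_⟩
    have heq : S ∩ T = (𝒮 ∩ 𝒯).biUnion (fun X => A X ∩ B X) := by
      ext p
      simp only [mem_inter, hS, hT, mem_biUnion]
      constructor
      · rintro ⟨⟨X, hX𝒮, hpA⟩, ⟨Y, hY𝒯, hpB⟩⟩
        have hX𝒞 : X ∈ 𝒞 := h𝕼𝒞 𝒮 h𝒮 hX𝒮
        have hY𝒞 : Y ∈ 𝒞 := h𝕼𝒞 𝒯 h𝒯 hY𝒯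
        have hpX : p ∈ X := (hAprop X hX𝒞).1 hpA
        have hpY : p ∈ Y := (hBprop Y hY𝒞).1 hpB
        have hXY : X = Y := by
          by_contra hne
          exact (Finset.disjoint_left.mp (hpart hX𝒞 hY𝒞 hne) hpX) hpY
        subst hXY
        exact ⟨X, ⟨hX𝒮, hY𝒯⟩, hpA, hpB⟩
      · rintro ⟨X, hX, hpA, hpB⟩
        exact ⟨⟨X, hX.1, hpA⟩, ⟨X, hX.2, hpB⟩⟩
    have hcard : (S ∩ T).card = (2 * t - c) * slash𝕼 := by
      rw [heq, card_biUnion]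
      · rw [Finset.sum_congr rfl (fun X hX => hABprop X
          (h𝕼𝒞 𝒮 h𝒮 (mem_inter.mp hX).1)), Finset.sum_const, hST, smul_eq_mul,
          Nat.mul_comm]
      · intro X hX Y hY hne
        have hX𝒞 : X ∈ 𝒞 := h𝕼𝒞 𝒮 h𝒮 (mem_inter.mp hX).1
        have hY𝒞 : Y ∈ 𝒞 := h𝕼𝒞 𝒮 h𝒮 (mem_inter.mp hY).1
        exact (hpart hX𝒞 hY𝒞 hne).mono
          (inter_subset_left.trans (hAprop X hX𝒞).1)
          (inter_subset_left.trans (hAprop Y hY𝒞).1)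
    rw [hcard]
    push_cast [Nat.cast_sub hc2t]
    rw [ht]; ring
  · -- lower bound
    rintro x ⟨S, hSQ, T, hTQ, rfl⟩
    simp only [Set.mem_setOf_eq] at hSQ hTQ
    obtain ⟨𝒮, h𝒮, hSprop⟩ := hSQ
    obtain ⟨𝒯, h𝒯, hTprop⟩ := hTQ
    have hslash_le : slash𝕼 ≤ (𝒮 ∩ 𝒯).card := hslash.2 ⟨𝒮, h𝒮, 𝒯, h𝒯, rfl⟩
    have hsub : (𝒮 ∩ 𝒯).biUnion (fun X => S ∩ T ∩ X) ⊆ S ∩ T :=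
      biUnion_subset.mpr fun X _ => inter_subset_left
    have hdisj : ∀ X ∈ 𝒮 ∩ 𝒯, ∀ Y ∈ 𝒮 ∩ 𝒯, X ≠ Y →
        Disjoint (S ∩ T ∩ X) (S ∩ T ∩ Y) := by
      intro X hX Y hY hne
      have hX𝒞 : X ∈ 𝒞 := h𝕼𝒞 𝒮 h𝒮 (mem_inter.mp hX).1
      have hY𝒞 : Y ∈ 𝒞 := h𝕼𝒞 𝒮 h𝒮 (mem_inter.mp hY).1
      exact (hpart hX𝒞 hY𝒞 hne).mono inter_subset_right inter_subset_right
    have hbig : (2 * t - c) * slash𝕼 ≤ (S ∩ T).card := by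
      calc (2 * t - c) * slash𝕼 ≤ (2 * t - c) * (𝒮 ∩ 𝒯).card :=
            Nat.mul_le_mul_left _ hslash_le
        _ = ∑ _X ∈ 𝒮 ∩ 𝒯, (2 * t - c) := by
            rw [Finset.sum_const, smul_eq_mul, Nat.mul_comm]
        _ ≤ ∑ X ∈ 𝒮 ∩ 𝒯, (S ∩ T ∩ X).card := by
            refine Finset.sum_le_sum fun X hX => ?_
            have hX𝒞 : X ∈ 𝒞 := h𝕼𝒞 𝒮 h𝒮 (mem_inter.mp hX).1
            exact key S T X hX𝒞 (hSprop X (mem_inter.mp hX).1)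
              (hTprop X (mem_inter.mp hX).2)
        _ = ((𝒮 ∩ 𝒯).biUnion (fun X => S ∩ T ∩ X)).card :=
            (card_biUnion hdisj).symm
        _ ≤ (S ∩ T).card := card_le_card hsub
    calc (2 * r - 1) * c * slash𝕼 = ((2 * t - c : ℕ) : ℚ) * slash𝕼 := by rw [hcast]
      _ = (((2 * t - c) * slash𝕼 : ℕ) : ℚ) := by push_cast; ring
      _ ≤ ((S ∩ T).card : ℚ) := by exact_mod_cast hbig
end

section
/- Let 𝕼 be a finite nonempty family of subsets of a finite set 𝒞 with msg(𝕼)·load(𝕼) ≤ μ·λ, where msg(𝕼) is the maximum member size and load(𝕼) = max_C deg(C)/|𝕼|. Let P be partitioned into parts of size c indexed by 𝒞, r ∈ (1/2,1), rc ∈ ℤ. Then slash(𝔓_r(𝕼)) ≤ (2r−1)·c·μ·λ. -/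
open Finset

lemma part_pick {P : Type*} [DecidableEq P] (c t : ℕ) (htc : t ≤ c) (hct : c ≤ 2 * t)
    (X : Finset P) (hX : X.card = c) :
    ∃ S T : Finset P, S ⊆ X ∧ T ⊆ X ∧ t ≤ S.card ∧ t ≤ T.card ∧ (S ∩ T).card ≤ 2 * t - c := by
  obtain ⟨S, hSX, hScard⟩ := Finset.exists_subset_card_eq (show t ≤ X.card by omega)
  obtain ⟨U, hUS, hUcard⟩ := Finset.exists_subset_card_eq (show 2 * t - c ≤ S.card by omega)
  have hdisj : Disjoint (X \ S) U := Finset.sdiff_disjoint.mono_right hUS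
  refine ⟨S, (X \ S) ∪ U, hSX, Finset.union_subset Finset.sdiff_subset (hUS.trans hSX),
    by omega, ?_, ?_⟩
  · rw [Finset.card_union_of_disjoint hdisj, Finset.card_sdiff_of_subset hSX]; omega
  · have hsub : S ∩ ((X \ S) ∪ U) ⊆ U := by
      intro x hx
      rcases Finset.mem_inter.1 hx with ⟨h1, h2⟩
      rcases Finset.mem_union.1 h2 with h | h
      · exact absurd h1 (Finset.mem_sdiff.1 h).2
      · exact h
    exact (Finset.card_le_card hsub).trans hUcard.le


/-- If msg(𝕼)·load(𝕼) ≤ μ·λ, the parts have size c, and 1/2 < r < 1 with rc = t ∈ ℤ,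
then slash(𝔓_r(𝕼)) ≤ (2r−1)·c·μ·λ, witnessed by a pair of quorums of small intersection. -/
theorem slash_upper_bound {P : Type*} [Fintype P] [DecidableEq P]
    (𝒞set : Finset (Finset P)) (c t : ℕ) (r : ℚ)
    (hpart : (𝒞set : Set (Finset P)).PairwiseDisjoint id)
    (hcover : 𝒞set.sup id = Finset.univ)
    (hsize : ∀ X ∈ 𝒞set, X.card = c)
    (hr : 1 / 2 < r) (hr1 : r < 1) (ht : (t : ℚ) = r * c)
    (𝕼 : Finset (Finset (Finset P))) (h𝕼 : 𝕼.Nonempty)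
    (h𝕼𝒞 : ∀ 𝒮 ∈ 𝕼, 𝒮 ⊆ 𝒞set)
    (msg : ℕ) (hmsg : msg = 𝕼.sup Finset.card)
    (load : ℚ)
    (hload : IsGreatest
      ((fun C => ((𝕼.filter fun Q => C ∈ Q).card : ℚ) / 𝕼.card) '' (𝒞set : Set (Finset P)))
      load)
    (μ lam : ℚ) (hmul : (msg : ℚ) * load ≤ μ * lam)
    (𝒬 : Set (Finset P))
    (h𝒬 : 𝒬 = {S : Finset P | ∃ 𝒮 ∈ 𝕼, ∀ X ∈ 𝒮, r * c ≤ ((S ∩ X).card : ℚ)}) :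
    ∃ S ∈ 𝒬, ∃ T ∈ 𝒬, ((S ∩ T).card : ℚ) ≤ (2 * r - 1) * c * μ * lam := by
  classical
  -- basic numerics
  have hc0 : (0:ℚ) ≤ (c:ℚ) := Nat.cast_nonneg c
  have hr0 : (0:ℚ) < r := lt_trans (by norm_num) hr
  have htc : t ≤ c := by
    have : (t:ℚ) ≤ (c:ℚ) := by
      rw [ht]
      nlinarith
    exact_mod_cast this
  have hct : c ≤ 2 * t := by
    have : (c:ℚ) ≤ 2 * (t:ℚ) := by rw [ht]; nlinarith
    exact_mod_cast this
  have hn0 : (0:ℚ) < (𝕼.card : ℚ) := by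
    exact_mod_cast Finset.card_pos.2 h𝕼
  set n : ℚ := (𝕼.card : ℚ) with hn
  -- load is nonnegative
  have hload0 : 0 ≤ load := by
    obtain ⟨C, _, hC⟩ := hload.1
    rw [← hC]
    positivity
  -- degree function
  set degq : Finset P → ℚ := fun C => ((𝕼.filter fun Q => C ∈ Q).card : ℚ) with hdegq
  have hdeg_le : ∀ C ∈ 𝒞set, degq C ≤ load * n := by
    intro C hC
    have h1 : degq C / n ≤ load := hload.2 ⟨C, hC, rfl⟩
    calc degq C = degq C / n * n := by field_simp
    _ ≤ load * n := by
          exact mul_le_mul_of_nonneg_right h1 hn0.le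
  have hdeg_nonneg : ∀ C, 0 ≤ degq C := fun C => Nat.cast_nonneg _
  -- sum of degrees
  have hsum_deg : ∑ C ∈ 𝒞set, degq C ≤ n * msg := by
    have h1 : ∑ C ∈ 𝒞set, degq C = ∑ A ∈ 𝕼, ((A.card : ℚ)) := by
      simp only [hdegq]
      push_cast [Finset.card_filter]
      rw [Finset.sum_comm]
      apply Finset.sum_congr rfl
      intro A hA
      rw [Finset.sum_ite_mem, Finset.inter_eq_right.2 (h𝕼𝒞 A hA)]
      simp
    rw [h1]
    calc ∑ A ∈ 𝕼, ((A.card : ℚ)) ≤ ∑ _A ∈ 𝕼, (msg : ℚ) := by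
          apply Finset.sum_le_sum
          intro A hA
          exact_mod_cast Nat.cast_le.2 (hmsg ▸ Finset.le_sup (f := Finset.card) hA)
    _ = n * msg := by rw [Finset.sum_const, nsmul_eq_mul]
  -- the double-sum identity and bound
  have hkey : ∑ A ∈ 𝕼, ∑ B ∈ 𝕼, ((A ∩ B).card : ℚ) ≤ n * n * (msg * load) := by
    have hAB : ∀ A ∈ 𝕼, ∀ B ∈ 𝕼, ((A ∩ B).card : ℚ) =
        ∑ C ∈ 𝒞set, (if C ∈ A then (1:ℚ) else 0) * (if C ∈ B then (1:ℚ) else 0) := by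
      intro A hA B hB
      have hABs : A ∩ B = 𝒞set.filter (fun C => C ∈ A ∧ C ∈ B) := by
        ext C
        simp only [Finset.mem_inter, Finset.mem_filter]
        exact ⟨fun ⟨h1, h2⟩ => ⟨h𝕼𝒞 A hA h1, h1, h2⟩, fun ⟨_, h⟩ => h⟩
      rw [hABs, Finset.card_filter]
      push_cast
      apply Finset.sum_congr rfl
      intro C _
      by_cases h1 : C ∈ A <;> by_cases h2 : C ∈ B <;> simp [h1, h2]
    calc ∑ A ∈ 𝕼, ∑ B ∈ 𝕼, ((A ∩ B).card : ℚ)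
        = ∑ A ∈ 𝕼, ∑ B ∈ 𝕼, ∑ C ∈ 𝒞set,
            (if C ∈ A then (1:ℚ) else 0) * (if C ∈ B then (1:ℚ) else 0) := by
          apply Finset.sum_congr rfl; intro A hA
          apply Finset.sum_congr rfl; intro B hB
          exact hAB A hA B hB
      _ = ∑ C ∈ 𝒞set, degq C * degq C := by
          rw [Finset.sum_congr rfl (fun A _ => Finset.sum_comm), Finset.sum_comm]
          apply Finset.sum_congr rfl
          intro C _
          rw [← Finset.sum_mul_sum]
          congr 1 <;> rw [Finset.sum_boole]
      _ ≤ ∑ C ∈ 𝒞set, (load * n) * degq C := by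
          apply Finset.sum_le_sum
          intro C hC
          exact mul_le_mul_of_nonneg_right (hdeg_le C hC) (hdeg_nonneg C)
      _ = (load * n) * ∑ C ∈ 𝒞set, degq C := by rw [Finset.mul_sum]
      _ ≤ (load * n) * (n * msg) := by
          apply mul_le_mul_of_nonneg_left hsum_deg (by positivity)
      _ = n * n * (msg * load) := by ring
  -- find A, B with small intersection
  have hex : ∃ p ∈ 𝕼 ×ˢ 𝕼, (((p.1 ∩ p.2).card : ℚ)) ≤ msg * load := by
    apply Finset.exists_le_of_sum_le (h𝕼.product h𝕼)
    rw [Finset.sum_const, Finset.card_product, Finset.sum_product]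
    calc ∑ A ∈ 𝕼, ∑ B ∈ 𝕼, ((A ∩ B).card : ℚ) ≤ n * n * (msg * load) := hkey
    _ = (𝕼.card * 𝕼.card) • ((msg : ℚ) * load) := by
        rw [nsmul_eq_mul]; push_cast; ring
  obtain ⟨⟨A, B⟩, hABmem, hABsmall⟩ := hex
  rw [Finset.mem_product] at hABmem
  obtain ⟨hA, hB⟩ := hABmem
  -- choose per-part subsets
  have hpick : ∀ X : Finset P, ∃ S T : Finset P, X ∈ 𝒞set →
      S ⊆ X ∧ T ⊆ X ∧ t ≤ S.card ∧ t ≤ T.card ∧ (S ∩ T).card ≤ 2 * t - c := by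
    intro X
    by_cases hX : X ∈ 𝒞set
    · obtain ⟨S, T, h⟩ := part_pick c t htc hct X (hsize X hX)
      exact ⟨S, T, fun _ => h⟩
    · exact ⟨∅, ∅, fun h => absurd h hX⟩
  choose Sf Tf hST using hpick
  set S : Finset P := A.biUnion Sf with hS
  set T : Finset P := B.biUnion Tf with hT
  -- membership in 𝒬
  have hmemQ : ∀ (𝒮 : Finset (Finset P)), 𝒮 ∈ 𝕼 → ∀ (f : Finset P → Finset P),
      (∀ X ∈ 𝒞set, f X ⊆ X ∧ t ≤ (f X).card) → (𝒮.biUnion f) ∈ 𝒬 := by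
    intro 𝒮 h𝒮 f hf
    rw [h𝒬]
    refine ⟨𝒮, h𝒮, fun X hX => ?_⟩
    have hXC : X ∈ 𝒞set := h𝕼𝒞 𝒮 h𝒮 hX
    obtain ⟨hfX, hfcard⟩ := hf X hXC
    have hsub : f X ⊆ (𝒮.biUnion f) ∩ X :=
      Finset.subset_inter (Finset.subset_biUnion_of_mem f hX) hfX
    have : (t : ℚ) ≤ (((𝒮.biUnion f) ∩ X).card : ℚ) := by
      exact_mod_cast le_trans hfcard (Finset.card_le_card hsub)
    linarith [ht ▸ this]
  have hSQ : S ∈ 𝒬 := hmemQ A hA Sf (fun X hX => ⟨(hST X hX).1, (hST X hX).2.2.1⟩)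
  have hTQ : T ∈ 𝒬 := hmemQ B hB Tf (fun X hX => ⟨(hST X hX).2.1, (hST X hX).2.2.2.1⟩)
  refine ⟨S, hSQ, T, hTQ, ?_⟩
  -- bound the intersection
  have hsubST : S ∩ T ⊆ (A ∩ B).biUnion (fun X => Sf X ∩ Tf X) := by
    intro x hx
    rcases Finset.mem_inter.1 hx with ⟨hxS, hxT⟩
    rcases Finset.mem_biUnion.1 hxS with ⟨X, hXA, hxSX⟩
    rcases Finset.mem_biUnion.1 hxT with ⟨Y, hYB, hxTY⟩
    have hXC : X ∈ 𝒞set := h𝕼𝒞 A hA hXA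
    have hYC : Y ∈ 𝒞set := h𝕼𝒞 B hB hYB
    have hxX : x ∈ X := (hST X hXC).1 hxSX
    have hxY : x ∈ Y := (hST Y hYC).2.1 hxTY
    have hXY : X = Y := by
      by_contra hne
      exact Finset.disjoint_left.1 (hpart hXC hYC hne) hxX hxY
    subst hXY
    exact Finset.mem_biUnion.2 ⟨X, Finset.mem_inter.2 ⟨hXA, hYB⟩,
      Finset.mem_inter.2 ⟨hxSX, hxTY⟩⟩
  have hcardST : (S ∩ T).card ≤ (A ∩ B).card * (2 * t - c) := by
    calc (S ∩ T).card ≤ ((A ∩ B).biUnion (fun X => Sf X ∩ Tf X)).card :=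
          Finset.card_le_card hsubST
    _ ≤ ∑ X ∈ A ∩ B, (Sf X ∩ Tf X).card := Finset.card_biUnion_le
    _ ≤ ∑ _X ∈ A ∩ B, (2 * t - c) := by
        apply Finset.sum_le_sum
        intro X hX
        exact (hST X (h𝕼𝒞 A hA (Finset.mem_inter.1 hX).1)).2.2.2.2
    _ = (A ∩ B).card * (2 * t - c) := by rw [Finset.sum_const, smul_eq_mul]
  have h2tc : ((2 * t - c : ℕ) : ℚ) = (2 * r - 1) * c := by
    rw [Nat.cast_sub hct]
    push_cast [ht]
    ring
  have h2tc0 : (0:ℚ) ≤ (2 * r - 1) * c := by nlinarith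
  have hk0 : (0:ℚ) ≤ ((A ∩ B).card : ℚ) := Nat.cast_nonneg _
  have hml : ((A ∩ B).card : ℚ) ≤ μ * lam := hABsmall.trans hmul
  calc ((S ∩ T).card : ℚ) ≤ ((A ∩ B).card : ℚ) * ((2 * t - c : ℕ) : ℚ) := by
        exact_mod_cast Nat.cast_le.2 hcardST
  _ = (2 * r - 1) * c * ((A ∩ B).card : ℚ) := by rw [h2tc]; ring
  _ ≤ (2 * r - 1) * c * (μ * lam) := mul_le_mul_of_nonneg_left hml h2tc0
  _ = (2 * r - 1) * c * μ * lam := by ring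
end
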